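/- Let α, β > 0 and (v, θ, ω) ∈ ℝ³ with ω ≠ 0 and ω·H₁(v,θ,ω) < 0. Set t₁ = −H₁(v,θ,ω)/(2αω), t₂ = |ω|/α, and let s₄ ∈ {−1,1} satisfy s₄·ω = −|ω|. Then t₁ > 0, and there exists s₃ ∈ {−1,1} such that t₃ := v/(s₃β) + t₁ > 0 and the C2b final state from (v, θ, ω) with durations t₁, t₂, t₃ and signs s₃, s₄ equals (0, 0, 0). -/

import Mathlib

noncomputable def H1 (α v θ ω : ℝ) : ℝ := 2 * α * θ + ω * |ω|

/-- The C2b final state `(v_f, θ_f, ω_f)`: first phase linear acceleration `s₃ * β`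
for time `t₁`, second phase angular acceleration `s₄ * α` for time `t₂`, third phase
linear acceleration `-s₃ * β` for time `t₃`. -/
noncomputable def c2bFinal (α β v θ ω t₁ t₂ t₃ s₃ s₄ : ℝ) : ℝ × ℝ × ℝ :=
  (v + s₃ * β * (t₁ - t₃),
   θ + ω * t₁ + ω * t₂ + s₄ * α * t₂ ^ 2 / 2 + (ω + s₄ * α * t₂) * t₃,
   ω + s₄ * α * t₂)

theorem stmt3 (α β v θ ω : ℝ) (hα : 0 < α) (hβ : 0 < β)
    (hω : ω ≠ 0) (hωH1 : ω * H1 α v θ ω < 0)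
    (t₁ t₂ : ℝ)
    (ht₁ : t₁ = -(H1 α v θ ω) / (2 * α * ω))
    (ht₂ : t₂ = |ω| / α)
    (s₄ : ℝ) (hs₄ : s₄ = -1 ∨ s₄ = 1) (hs₄ω : s₄ * ω = -|ω|) :
    0 < t₁ ∧
    ∃ s₃ : ℝ, (s₃ = -1 ∨ s₃ = 1) ∧ 0 < v / (s₃ * β) + t₁ ∧
      c2bFinal α β v θ ω t₁ t₂ (v / (s₃ * β) + t₁) s₃ s₄ = (0, 0, 0) := by
  have hωne : ω ≠ 0 := hω
  have hαne : (α : ℝ) ≠ 0 := ne_of_gt hα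
  have hβne : (β : ℝ) ≠ 0 := ne_of_gt hβ
  have ht₁' : t₁ = -(ω * H1 α v θ ω) / (2 * α * ω ^ 2) := by
    rw [ht₁]; field_simp
  have ht₁pos : 0 < t₁ := by
    rw [ht₁']
    apply div_pos (by linarith) (by positivity)
  -- key facts about s₄
  have hs₄sq : s₄ * s₄ = 1 := by rcases hs₄ with h | h <;> simp [h]
  have hs₄abs : s₄ * |ω| = -ω := by
    have := congrArg (fun x => s₄ * x) hs₄ω
    rw [← mul_assoc, hs₄sq, one_mul] at this
    linarith
  -- ω_f = 0
  have hωf : ω + s₄ * α * t₂ = 0 := by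
    rw [ht₂]
    field_simp
    linear_combination hs₄abs
  -- θ part
  have hθ : θ + ω * t₁ + ω * t₂ + s₄ * α * t₂ ^ 2 / 2 = 0 := by
    have hωt₁ : ω * t₁ = -(2 * α * θ + ω * |ω|) / (2 * α) := by
      rw [ht₁, H1]; field_simp
    have habs : |ω| ^ 2 = ω ^ 2 := sq_abs ω
    have hkey : s₄ * ω ^ 2 = -(ω * |ω|) := by
      rw [← sq_abs ω, sq]; linear_combination |ω| * hs₄abs
    rw [hωt₁, ht₂]
    field_simp
    linear_combination hkey + s₄ * habs
  refine ⟨ht₁pos, ?_⟩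
  -- choose s₃
  rcases le_or_gt 0 v with hv | hv
  · refine ⟨1, Or.inr rfl, ?_, ?_⟩
    · have : 0 ≤ v / (1 * β) := by positivity
      linarith
    · simp only [c2bFinal, Prod.mk.injEq]
      refine ⟨by field_simp; ring, ?_, hωf⟩
      rw [hωf]; simpa using hθ
  · refine ⟨-1, Or.inl rfl, ?_, ?_⟩
    · have : 0 < v / (-1 * β) := by
        apply div_pos_of_neg_of_neg hv; simp [hβ]
      linarith
    · simp only [c2bFinal, Prod.mk.injEq]
      refine ⟨by field_simp; ring, ?_, hωf⟩
      rw [hωf]; simpa using hθ
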